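/- For arbitrary functions λ : ℕ → ℂ and μ : ℕ → ℝ, the operator A = F⁰₀ + F⁰₁ − ½I restricted to the finitely supported sequences is dissipative: Re⟨u, (F⁰₀ + F⁰₁ − ½I)u⟩ ≤ 0 for every finitely supported u ∈ ℓ²(ℕ). -/

import Mathlib

/-- The coefficient `F⁰₀ = -½|λ|²(N+1) + iμ(N)` of the inverse harmonic oscillator model,
acting pointwise on sequences. -/
noncomputable def ihoF00 (lam : ℕ → ℂ) (mu : ℕ → ℝ) (u : ℕ → ℂ) : ℕ → ℂ :=
  fun n => (-(1 / 2 : ℂ) * ((‖lam (n + 1)‖ : ℝ) : ℂ) ^ 2 + Complex.I * (mu n : ℂ)) * u n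

/-- The coefficient `F⁰₁ = W*λ̄(N)`: `F⁰₁ e_n = conj(λ(n)) e_{n-1}`, `F⁰₁ e₀ = 0`. -/
noncomputable def ihoF01 (lam : ℕ → ℂ) (u : ℕ → ℂ) : ℕ → ℂ :=
  fun n => (starRingEnd ℂ) (lam (n + 1)) * u (n + 1)

/-- The `ℓ²` inner product of two (finitely supported) sequences. -/
noncomputable def l2ip (x y : ℕ → ℂ) : ℂ := ∑' n, (starRingEnd ℂ) (x n) * y n

/-- For arbitrary `λ : ℕ → ℂ` and `μ : ℕ → ℝ`, the operator
`A = F⁰₀ + F⁰₁ - ½I` restricted to finitely supported sequences is dissipative: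
`Re⟨u, (F⁰₀ + F⁰₁ - ½I)u⟩ ≤ 0` for every finitely supported `u ∈ ℓ²(ℕ)`. -/
theorem iho_affine_combination_dissipative (lam : ℕ → ℂ) (mu : ℕ → ℝ)
    (u : ℕ → ℂ) (hu : (Function.support u).Finite) :
    (l2ip u (fun n => ihoF00 lam mu u n + ihoF01 lam u n - (1 / 2 : ℂ) * u n)).re ≤ 0 := by
  obtain ⟨N, hN⟩ := hu.bddAbove
  have hzero : ∀ n, N < n → u n = 0 := by
    intro n hn
    by_contra h
    exact absurd (hN (Function.mem_support.mpr h)) (by omega)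
  set f : ℕ → ℂ := fun n =>
    (starRingEnd ℂ) (u n) * (ihoF00 lam mu u n + ihoF01 lam u n - (1 / 2 : ℂ) * u n) with hf
  have hsum : l2ip u (fun n => ihoF00 lam mu u n + ihoF01 lam u n - (1 / 2 : ℂ) * u n)
      = ∑ n ∈ Finset.range (N + 1), f n := by
    apply tsum_eq_sum
    intro n hn
    have h0 : u n = 0 := hzero n (by simpa using hn)
    simp [hf, h0]
  rw [hsum, Complex.re_sum]
  have key : ∀ n, (f n).re ≤
      (‖u (n + 1)‖)^2 / 2 - (‖u n‖)^2 / 2 := by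
    intro n
    set x := u n
    set y := u (n + 1)
    set l := lam (n + 1)
    have hfe : f n = (-(1 / 2 : ℂ) * ((‖l‖ : ℝ) : ℂ) ^ 2 - 1 / 2) * ((starRingEnd ℂ) x * x)
        + (Complex.I * (mu n : ℂ)) * ((starRingEnd ℂ) x * x)
        + (starRingEnd ℂ) x * (starRingEnd ℂ) l * y := by
      simp only [hf, ihoF00, ihoF01]; ring
    have hxx : (starRingEnd ℂ) x * x = ((‖x‖ ^ 2 : ℝ) : ℂ) := by
      rw [mul_comm, Complex.mul_conj]
      push_cast [Complex.normSq_eq_norm_sq]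
      ring
    have h1 : (f n).re = (-(1/2) * (‖l‖)^2 - 1/2) * (‖x‖)^2
        + ((starRingEnd ℂ) x * (starRingEnd ℂ) l * y).re := by
      rw [hfe, hxx]
      simp [Complex.add_re, Complex.mul_re, Complex.sub_re, Complex.ofReal_re,
        Complex.ofReal_im, Complex.I_re, Complex.I_im, ← Complex.ofReal_pow]
    rw [h1]
    have h2 : ((starRingEnd ℂ) x * (starRingEnd ℂ) l * y).re ≤
        ‖x‖ * ‖l‖ * ‖y‖ := by
      calc ((starRingEnd ℂ) x * (starRingEnd ℂ) l * y).re
          ≤ ‖(starRingEnd ℂ) x * (starRingEnd ℂ) l * y‖ := Complex.re_le_norm _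
        _ = ‖x‖ * ‖l‖ * ‖y‖ := by
            simp [map_mul]
    have h3 : ‖x‖ * ‖l‖ * ‖y‖ ≤
        (‖l‖)^2 * (‖x‖)^2 / 2 + (‖y‖)^2 / 2 := by
      nlinarith [sq_nonneg (‖l‖ * ‖x‖ - ‖y‖),
        norm_nonneg x, norm_nonneg y, norm_nonneg l]
    nlinarith [sq_nonneg (‖x‖)]
  calc ∑ n ∈ Finset.range (N + 1), (f n).re
      ≤ ∑ n ∈ Finset.range (N + 1),
        ((‖u (n + 1)‖)^2 / 2 - (‖u n‖)^2 / 2) :=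
        Finset.sum_le_sum (fun n _ => key n)
    _ = (‖u (N + 1)‖)^2 / 2 - (‖u 0‖)^2 / 2 :=
        Finset.sum_range_sub (fun n => (‖u n‖)^2 / 2) (N + 1)
    _ ≤ 0 := by
        rw [hzero (N + 1) (by omega)]
        simp
        positivity
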